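/- Let H be a Puiseux monoid with nonempty conductor (H : Ĥ) ≠ ∅. If H satisfies the ascending chain condition on principal ideals, then 0 is not a limit point of H ∖ {0}. -/

import Mathlib

/-- Bezout-style lemma: if `p, q` are coprime positive integers and `p*q ≤ n`,
then `n` is a nonnegative combination of `p` and `q`. -/
lemma frob_aux (p q n : ℤ) (hp : 0 < p) (hq : 0 < q) (hco : IsCoprime p q)
    (hn : p * q ≤ n) : ∃ x y : ℤ, 0 ≤ x ∧ 0 ≤ y ∧ n = x * p + y * q := by
  obtain ⟨u, v, huv⟩ := hco
  set Y := (n * v) % p with hYdef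
  have hY0 : 0 ≤ Y := Int.emod_nonneg _ (ne_of_gt hp)
  have hYp : Y < p := Int.emod_lt_of_pos _ hp
  have hmod : n * v - Y = p * (n * v / p) := by
    rw [hYdef, Int.emod_def]; ring
  have hdvd : p ∣ n - Y * q := by
    refine ⟨n * u + (n * v / p) * q, ?_⟩
    linear_combination -n * huv + q * hmod
  obtain ⟨X, hX⟩ := hdvd
  have hX0 : 0 ≤ X := by nlinarith
  exact ⟨X, Y, hX0, hY0, by linarith⟩

/-- For integers `0 < B < A`, there is `K ≥ 0` with `K*A + m*(A-B)` a
nonnegative combination of `A` and `B` for every `m : ℕ`. -/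
lemma frob_gcd (A B : ℤ) (hB : 0 < B) (hBA : B < A) :
    ∃ K : ℤ, 0 ≤ K ∧ ∀ m : ℕ, ∃ x y : ℤ, 0 ≤ x ∧ 0 ≤ y ∧
      K * A + (m : ℤ) * (A - B) = x * A + y * B := by
  set d : ℕ := Int.gcd A B with hd
  have hdpos : 0 < d := Int.gcd_pos_of_ne_zero_left _ (by omega)
  obtain ⟨A', hA'⟩ : (d : ℤ) ∣ A := Int.gcd_dvd_left A B
  obtain ⟨B', hB'⟩ : (d : ℤ) ∣ B := Int.gcd_dvd_right A B
  have hdz : (0 : ℤ) < (d : ℤ) := by exact_mod_cast hdpos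
  have hA'pos : 0 < A' := by nlinarith
  have hB'pos : 0 < B' := by nlinarith
  have hA'B' : B' < A' := by nlinarith
  have hco : IsCoprime A' B' := by
    rw [Int.isCoprime_iff_gcd_eq_one]
    have h1 : A / (d : ℤ) = A' := by rw [hA']; exact Int.mul_ediv_cancel_left _ (ne_of_gt hdz)
    have h2 : B / (d : ℤ) = B' := by rw [hB']; exact Int.mul_ediv_cancel_left _ (ne_of_gt hdz)
    have := Int.gcd_div_gcd_div_gcd (i := A) (j := B) (by exact_mod_cast hdz)
    rwa [← hd, h1, h2] at this
  refine ⟨B, le_of_lt hB, fun m => ?_⟩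
  have hn : A' * B' ≤ B * A' + (m : ℤ) * (A' - B') := by
    have hm : (0 : ℤ) ≤ (m : ℤ) := Int.natCast_nonneg m
    have h1 : B' ≤ B := by nlinarith
    have h2 : B' * A' ≤ B * A' := mul_le_mul_of_nonneg_right h1 (le_of_lt hA'pos)
    have h3 : 0 ≤ (m : ℤ) * (A' - B') := mul_nonneg hm (by linarith)
    nlinarith
  obtain ⟨x, y, hx, hy, hxy⟩ := frob_aux A' B' (B * A' + (m : ℤ) * (A' - B'))
    hA'pos hB'pos hco hn
  refine ⟨x, y, hx, hy, ?_⟩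
  rw [hA', hB']
  rw [hB'] at hxy
  linear_combination (d : ℤ) * hxy

/-- An integer-coefficient multiple of an element of `H` with nonnegative
coefficient is in `H`. -/
lemma int_mul_mem (H : AddSubmonoid ℚ) {a : ℚ} (ha : a ∈ H) {x : ℤ} (hx : 0 ≤ x) :
    (x : ℚ) * a ∈ H := by
  lift x to ℕ using hx
  have : ((x : ℕ) : ℚ) * a = (x : ℕ) • a := by rw [nsmul_eq_mul]
  rw [Int.cast_natCast, this]
  exact AddSubmonoid.nsmul_mem H ha x

/-- The key "complete integral closure" lemma: if `a, b ∈ H` with `0 ≤ b ≤ a`,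
then `a - b` is almost integral over `H`. -/
lemma hat_mem (H : AddSubmonoid ℚ) {a b : ℚ} (ha : a ∈ H) (hb : b ∈ H)
    (hb0 : 0 ≤ b) (hba : b ≤ a) :
    ∃ c ∈ H, ∀ m : ℕ, c + (m : ℚ) * (a - b) ∈ H := by
  rcases eq_or_lt_of_le hb0 with hb0' | hb0'
  · -- b = 0
    refine ⟨0, H.zero_mem, fun m => ?_⟩
    rw [← hb0', sub_zero, zero_add]
    have : (m : ℚ) * a = m • a := by rw [nsmul_eq_mul]
    rw [this]; exact AddSubmonoid.nsmul_mem H ha m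
  rcases eq_or_lt_of_le hba with hba' | hba'
  · -- a = b
    refine ⟨0, H.zero_mem, fun m => ?_⟩
    rw [hba', sub_self, mul_zero, add_zero]
    exact H.zero_mem
  -- now 0 < b < a
  set D : ℤ := (a.den : ℤ) * (b.den : ℤ) with hD
  have hDpos : (0 : ℚ) < (D : ℚ) := by
    rw [hD]; push_cast; positivity
  set A : ℤ := a.num * (b.den : ℤ) with hA
  set B : ℤ := b.num * (a.den : ℤ) with hB
  have hda : ((a.den : ℚ)) ≠ 0 := by
    exact_mod_cast a.den_nz
  have hdb : ((b.den : ℚ)) ≠ 0 := by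
    exact_mod_cast b.den_nz
  have ha' : (a.num : ℚ) = a * (a.den : ℚ) := (div_eq_iff hda).mp (Rat.num_div_den a)
  have hb' : (b.num : ℚ) = b * (b.den : ℚ) := (div_eq_iff hdb).mp (Rat.num_div_den b)
  have hAq : (A : ℚ) = a * (D : ℚ) := by
    rw [hA, hD]; push_cast; rw [ha']; ring
  have hBq : (B : ℚ) = b * (D : ℚ) := by
    rw [hB, hD]; push_cast; rw [hb']; ring
  have hBpos : 0 < B := by
    have : (0 : ℚ) < (B : ℚ) := by rw [hBq]; positivity
    exact_mod_cast this
  have hABlt : B < A := by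
    have : (B : ℚ) < (A : ℚ) := by
      rw [hAq, hBq]; exact mul_lt_mul_of_pos_right hba' hDpos
    exact_mod_cast this
  obtain ⟨K, hK0, hKall⟩ := frob_gcd A B hBpos hABlt
  refine ⟨(K : ℚ) * a, int_mul_mem H ha hK0, fun m => ?_⟩
  obtain ⟨x, y, hx, hy, hxy⟩ := hKall m
  have key : (K : ℚ) * a + (m : ℚ) * (a - b) = (x : ℚ) * a + (y : ℚ) * b := by
    have hcast : (K : ℚ) * (A : ℚ) + (m : ℚ) * ((A : ℚ) - (B : ℚ))
        = (x : ℚ) * (A : ℚ) + (y : ℚ) * (B : ℚ) := by exact_mod_cast hxy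
    rw [hAq, hBq] at hcast
    have hDne : (D : ℚ) ≠ 0 := ne_of_gt hDpos
    apply mul_right_cancel₀ hDne
    linear_combination hcast
  rw [key]
  exact H.add_mem (int_mul_mem H ha hx) (int_mul_mem H hb hy)

/-- A Puiseux monoid with nonempty conductor satisfying the ACCP has 0 not a
limit point of H ∖ {0}. -/
theorem puiseux_accp_inf_pos (H : AddSubmonoid ℚ)
    (hpos : ∀ x ∈ H, 0 ≤ x) (hnt : ∃ x ∈ H, x ≠ 0)
    (hcond : ∃ x ∈ (AddSubgroup.closure (H : Set ℚ) : Set ℚ),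
      ∀ y ∈ {x ∈ (AddSubgroup.closure (H : Set ℚ) : Set ℚ) |
        ∃ c ∈ H, ∀ m : ℕ, c + (m : ℚ) * x ∈ H}, x + y ∈ H)
    (haccp : ∀ s : ℕ → ℚ, (∀ k, s k ∈ H) →
      (∀ k, ∃ h ∈ H, s k = s (k + 1) + h) → ∃ N, ∀ k, N ≤ k → s k = s N) :
    ∃ ε : ℚ, 0 < ε ∧ ∀ x ∈ H, x ≠ 0 → ε ≤ x := by
  by_contra hcon
  push_neg at hcon
  obtain ⟨f, hfG, hf⟩ := hcond
  -- small elements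
  have hsmall : ∀ i : ℕ, ∃ x, x ∈ H ∧ x ≠ 0 ∧ x < (1/2 : ℚ)^(i+1) := by
    intro i
    obtain ⟨x, hxH, hxne, hxlt⟩ := hcon ((1/2 : ℚ)^(i+1)) (by positivity)
    exact ⟨x, hxH, hxne, hxlt⟩
  choose e heH hene helt using hsmall
  have hepos : ∀ i, 0 < e i := fun i => lt_of_le_of_ne (hpos _ (heH i)) (Ne.symm (hene i))
  set S : ℕ → ℚ := fun k => ∑ i ∈ Finset.range k, e i with hSdef
  have hSmem : ∀ k, S k ∈ H := fun k => AddSubmonoid.sum_mem H (fun i _ => heH i)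
  have hS0 : ∀ k, 0 ≤ S k := fun k =>
    Finset.sum_nonneg (fun i _ => le_of_lt (hepos i))
  have hSbound : ∀ k, S k + (1/2 : ℚ)^k ≤ 1 := by
    intro k
    induction k with
    | zero => simp [hSdef]
    | succ n ih =>
      have : S (n+1) = S n + e n := Finset.sum_range_succ e n
      rw [this]
      have h1 : e n < (1/2 : ℚ)^(n+1) := helt n
      have h2 : (1/2 : ℚ)^(n+1) + (1/2 : ℚ)^(n+1) = (1/2 : ℚ)^n := by ring
      linarith
  -- big element T
  obtain ⟨x0, hx0H, hx0ne⟩ := hnt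
  have hx0pos : 0 < x0 := lt_of_le_of_ne (hpos _ hx0H) (Ne.symm hx0ne)
  obtain ⟨n0, hn0⟩ := exists_nat_ge (1 / x0)
  set T : ℚ := (n0 : ℚ) * x0 with hTdef
  have hTH : T ∈ H := by
    have : (n0 : ℚ) * x0 = n0 • x0 := by rw [nsmul_eq_mul]
    rw [hTdef, this]; exact AddSubmonoid.nsmul_mem H hx0H n0
  have hT1 : 1 ≤ T := by
    rw [hTdef]
    calc (1 : ℚ) = (1 / x0) * x0 := by field_simp
    _ ≤ (n0 : ℚ) * x0 := mul_le_mul_of_nonneg_right hn0 (le_of_lt hx0pos)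
  -- the descending chain
  set s : ℕ → ℚ := fun k => f + (T - S k) with hsdef
  have hsH : ∀ k, s k ∈ H := by
    intro k
    apply hf
    have hTS : T - S k ∈ AddSubgroup.closure (H : Set ℚ) :=
      AddSubgroup.sub_mem _ (AddSubgroup.subset_closure hTH)
        (AddSubgroup.subset_closure (hSmem k))
    have hSk1 : S k ≤ 1 := by
      have := hSbound k
      have : (0 : ℚ) < (1/2 : ℚ)^k := by positivity
      linarith [hSbound k]
    refine ⟨hTS, ?_⟩
    exact hat_mem H hTH (hSmem k) (hS0 k) (le_trans hSk1 hT1)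
  have hstep : ∀ k, ∃ h ∈ H, s k = s (k + 1) + h := by
    intro k
    refine ⟨e k, heH k, ?_⟩
    have : S (k+1) = S k + e k := Finset.sum_range_succ e k
    simp only [hsdef]
    rw [this]; ring
  obtain ⟨N, hN⟩ := haccp s hsH hstep
  have h1 := hN (N+1) (by omega)
  have h2 : S (N+1) = S N + e N := Finset.sum_range_succ e N
  have : e N = 0 := by
    have hs1 : f + (T - S (N+1)) = f + (T - S N) := h1
    rw [h2] at hs1; linarith
  exact hene N this
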